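/- Under the hypotheses of the previous bound, the CDF f of the density h satisfies exp(−(1−α)^(−γ) x^(−γ)) ≤ f(x) ≤ exp(−x^(−γ)) for all x > 0, and consequently γ x^(−γ−1) exp(−(1−α)^(−γ) x^(−γ)) ≤ h(x) ≤ γ (1−α)^(−γ) x^(−γ−1) exp(−x^(−γ)). -/

import Mathlib

open MeasureTheory Real Filter

theorem density_exponential_bounds (α γ : ℝ) (hα : 0 < α) (hα1 : α < 1) (hγ : 0 < γ)
    (h : ℝ → ℝ)
    (hpos : ∀ x, 0 ≤ h x)
    (hint : IntegrableOn h (Set.Ioi (0 : ℝ)))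
    (hnorm : ∫ u in Set.Ioi (0 : ℝ), h u = 1)
    (heqn : ∀ x > (0 : ℝ), h x = (γ / x) * ∫ u in Set.Ioo (0 : ℝ) x, h u / (x - α * u) ^ γ)
    (f : ℝ → ℝ)
    (hf : ∀ x, f x = ∫ u in Set.Ioo (0 : ℝ) x, h u)
    (hcont : Continuous h)
    (hderiv : ∀ x > (0 : ℝ), HasDerivAt f (h x) x)
    (hlim : Tendsto f atTop (nhds 1)) :
    ∀ x > (0 : ℝ),
      (Real.exp (-(1 - α) ^ (-γ) * x ^ (-γ)) ≤ f x ∧ f x ≤ Real.exp (-x ^ (-γ))) ∧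
      (γ * x ^ (-γ - 1) * Real.exp (-(1 - α) ^ (-γ) * x ^ (-γ)) ≤ h x ∧
        h x ≤ γ * (1 - α) ^ (-γ) * x ^ (-γ - 1) * Real.exp (-x ^ (-γ))) := by
  have h1α : (0:ℝ) < 1 - α := by linarith
  set c : ℝ := (1 - α) ^ (-γ) with hc
  -- Step 1: sandwich for h in terms of f
  have key : ∀ x > (0:ℝ),
      γ * x ^ (-γ - 1) * f x ≤ h x ∧ h x ≤ γ * c * x ^ (-γ - 1) * f x := by
    intro x hx
    have hIh : IntegrableOn h (Set.Ioo 0 x) := hint.mono_set Set.Ioo_subset_Ioi_self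
    have hden : ∀ u ∈ Set.Icc (0:ℝ) x, 0 < x - α * u := by
      intro u hu; nlinarith [hu.1, hu.2]
    have hcontφ : ContinuousOn (fun u => h u / (x - α * u) ^ γ) (Set.Icc 0 x) := by
      apply ContinuousOn.div hcont.continuousOn
      · exact ((continuous_const.sub (continuous_const.mul continuous_id)).continuousOn).rpow_const
          (fun u hu => Or.inl (hden u hu).ne')
      · intro u hu; exact (rpow_pos_of_pos (hden u hu) γ).ne'
    have hIφ : IntegrableOn (fun u => h u / (x - α * u) ^ γ) (Set.Ioo 0 x) :=
      (hcontφ.integrableOn_Icc).mono_set Set.Ioo_subset_Icc_self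
    have hxγ : (0:ℝ) < x ^ γ := rpow_pos_of_pos hx γ
    have h1αγ : (0:ℝ) < (1 - α) ^ γ := rpow_pos_of_pos h1α γ
    have hid : x ^ (-γ - 1) = (x ^ γ * x)⁻¹ := by
      rw [show -γ - 1 = -(γ + 1) by ring, rpow_neg hx.le, rpow_add hx, rpow_one]
    have hcinv : c = ((1 - α) ^ γ)⁻¹ := by rw [hc, rpow_neg h1α.le]
    constructor
    · -- lower bound
      have hlow : f x / x ^ γ ≤ ∫ u in Set.Ioo 0 x, h u / (x - α * u) ^ γ := by
        rw [hf, ← integral_div]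
        apply setIntegral_mono_on (hIh.div_const _) hIφ measurableSet_Ioo
        intro u hu
        have h0 : 0 < x - α * u := hden u ⟨hu.1.le, hu.2.le⟩
        have hle : (x - α * u) ^ γ ≤ x ^ γ := by
          apply rpow_le_rpow h0.le (by nlinarith [hu.1]) hγ.le
        exact div_le_div_of_nonneg_left (hpos u) (rpow_pos_of_pos h0 γ) hle
      have : γ / x * (f x / x ^ γ) ≤ γ / x * ∫ u in Set.Ioo 0 x, h u / (x - α * u) ^ γ :=
        mul_le_mul_of_nonneg_left hlow (by positivity)
      rw [← heqn x hx] at this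
      calc γ * x ^ (-γ - 1) * f x = γ / x * (f x / x ^ γ) := by
            rw [hid]; simp only [mul_inv, div_eq_mul_inv]; ring
        _ ≤ h x := this
    · -- upper bound
      have hup : (∫ u in Set.Ioo 0 x, h u / (x - α * u) ^ γ) ≤ f x / ((1 - α) * x) ^ γ := by
        rw [hf, ← integral_div]
        apply setIntegral_mono_on hIφ (hIh.div_const _) measurableSet_Ioo
        intro u hu
        have h0 : 0 < x - α * u := hden u ⟨hu.1.le, hu.2.le⟩
        have h0' : (0:ℝ) < (1 - α) * x := by positivity
        have hle : ((1 - α) * x) ^ γ ≤ (x - α * u) ^ γ := by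
          apply rpow_le_rpow h0'.le (by nlinarith [hu.2]) hγ.le
        exact div_le_div_of_nonneg_left (hpos u) (rpow_pos_of_pos h0' γ) hle
      have : γ / x * (∫ u in Set.Ioo 0 x, h u / (x - α * u) ^ γ)
          ≤ γ / x * (f x / ((1 - α) * x) ^ γ) :=
        mul_le_mul_of_nonneg_left hup (by positivity)
      rw [← heqn x hx] at this
      calc h x ≤ γ / x * (f x / ((1 - α) * x) ^ γ) := this
        _ = γ * c * x ^ (-γ - 1) * f x := by
            rw [hid, hcinv, mul_rpow h1α.le hx.le]; simp only [mul_inv, div_eq_mul_inv]; ring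
  -- Step 2: f bounds via monotone comparison
  have hrpow_deriv : ∀ y > (0:ℝ), HasDerivAt (fun y : ℝ => y ^ (-γ)) (-γ * y ^ (-γ - 1)) y := by
    intro y hy
    exact Real.hasDerivAt_rpow_const (p := -γ) (Or.inl hy.ne')
  have hcontf : ContinuousOn f (Set.Ioi (0:ℝ)) := fun y hy =>
    ((hderiv y hy).continuousAt).continuousWithinAt
  have hcontE : ∀ b : ℝ, ContinuousOn (fun y : ℝ => Real.exp (b * y ^ (-γ))) (Set.Ioi 0) := by
    intro b
    apply Real.continuous_exp.comp_continuousOn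
    exact continuousOn_const.mul
      (ContinuousOn.rpow_const continuousOn_id fun y hy => Or.inl (ne_of_gt hy))
  have hE : ∀ b : ℝ, Tendsto (fun y : ℝ => Real.exp (b * y ^ (-γ))) atTop (nhds 1) := by
    intro b
    have h1 : Tendsto (fun y : ℝ => b * y ^ (-γ)) atTop (nhds (b * 0)) :=
      (tendsto_rpow_neg_atTop hγ).const_mul b
    have := (Real.continuous_exp.tendsto (b * 0)).comp h1
    simpa [Function.comp_def] using this
  have hgderiv : ∀ b : ℝ, ∀ y > (0:ℝ),
      HasDerivAt (fun y => f y * Real.exp (b * y ^ (-γ)))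
        (Real.exp (b * y ^ (-γ)) * (h y - b * γ * y ^ (-γ - 1) * f y)) y := by
    intro b y hy
    have hd2 : HasDerivAt (fun y : ℝ => Real.exp (b * y ^ (-γ)))
        (Real.exp (b * y ^ (-γ)) * (b * (-γ * y ^ (-γ - 1)))) y :=
      (((hrpow_deriv y hy).const_mul b)).exp
    have := (hderiv y hy).mul hd2
    refine this.congr_deriv ?_
    ring
  have hglim : ∀ b : ℝ, Tendsto (fun y => f y * Real.exp (b * y ^ (-γ))) atTop (nhds 1) := by
    intro b
    have := hlim.mul (hE b)
    simpa using this
  intro x hx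
  -- upper bound on f : g = f * exp(x^(-γ)) is monotone, limit 1
  have hfx_ub : f x * Real.exp (x ^ (-γ)) ≤ 1 := by
    have hmono : MonotoneOn (fun y => f y * Real.exp (1 * y ^ (-γ))) (Set.Ioi (0:ℝ)) := by
      apply monotoneOn_of_hasDerivWithinAt_nonneg (convex_Ioi 0)
        (f' := fun y => Real.exp (1 * y ^ (-γ)) * (h y - 1 * γ * y ^ (-γ - 1) * f y))
      · exact hcontf.mul (hcontE 1)
      · intro y hy
        rw [interior_Ioi] at hy
        exact (hgderiv 1 y hy).hasDerivWithinAt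
      · intro y hy
        rw [interior_Ioi] at hy
        have := (key y hy).1
        have hEp : 0 < Real.exp (1 * y ^ (-γ)) := Real.exp_pos _
        nlinarith
    have hle1 : f x * Real.exp (1 * x ^ (-γ)) ≤ 1 := by
      apply ge_of_tendsto (hglim 1)
      filter_upwards [eventually_ge_atTop x] with y hy
      exact hmono (Set.mem_Ioi.2 hx) (Set.mem_Ioi.2 (lt_of_lt_of_le hx hy)) hy
    simpa using hle1
  -- lower bound on f : G = f * exp(c x^(-γ)) is antitone, limit 1
  have hfx_lb : 1 ≤ f x * Real.exp (c * x ^ (-γ)) := by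
    have hanti : AntitoneOn (fun y => f y * Real.exp (c * y ^ (-γ))) (Set.Ioi (0:ℝ)) := by
      apply antitoneOn_of_hasDerivWithinAt_nonpos (convex_Ioi 0)
        (f' := fun y => Real.exp (c * y ^ (-γ)) * (h y - c * γ * y ^ (-γ - 1) * f y))
      · exact hcontf.mul (hcontE c)
      · intro y hy
        rw [interior_Ioi] at hy
        exact (hgderiv c y hy).hasDerivWithinAt
      · intro y hy
        rw [interior_Ioi] at hy
        have := (key y hy).2
        have hEp : 0 < Real.exp (c * y ^ (-γ)) := Real.exp_pos _
        nlinarith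
    apply le_of_tendsto (hglim c)
    filter_upwards [eventually_ge_atTop x] with y hy
    exact hanti (Set.mem_Ioi.2 hx) (Set.mem_Ioi.2 (lt_of_lt_of_le hx hy)) hy
  have hEp1 : (0:ℝ) < Real.exp (x ^ (-γ)) := Real.exp_pos _
  have hEpc : (0:ℝ) < Real.exp (c * x ^ (-γ)) := Real.exp_pos _
  have hfub : f x ≤ Real.exp (-x ^ (-γ)) := by
    rw [Real.exp_neg, ← one_div]
    exact (le_div_iff₀ hEp1).2 hfx_ub
  have hflb : Real.exp (-c * x ^ (-γ)) ≤ f x := by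
    rw [neg_mul, Real.exp_neg, ← one_div]
    exact (div_le_iff₀ hEpc).2 hfx_lb
  refine ⟨⟨hflb, hfub⟩, ?_, ?_⟩
  · calc γ * x ^ (-γ - 1) * Real.exp (-c * x ^ (-γ))
        ≤ γ * x ^ (-γ - 1) * f x := by
          apply mul_le_mul_of_nonneg_left hflb (by positivity)
      _ ≤ h x := (key x hx).1
  · calc h x ≤ γ * c * x ^ (-γ - 1) * f x := (key x hx).2
      _ ≤ γ * c * x ^ (-γ - 1) * Real.exp (-x ^ (-γ)) := by
          apply mul_le_mul_of_nonneg_left hfub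
          have : (0:ℝ) < c := rpow_pos_of_pos h1α _
          positivity
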